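/- Let S be an m-dimensional space of C^{m-1} functions on [a,b] containing constants, such that every nonzero F ∈ S has at most m-1 zeros in [a,b] counting multiplicities up to m. Then for each ℓ = 2,...,m there exists a unique f_ℓ ∈ S with D^r f_ℓ(a) = 0 for r = 0,...,ℓ-2, f_ℓ(b) = 1, and D^r f_ℓ(b) = 0 for r = 1,...,m-ℓ. -/

import Mathlib

def VanishesTo (F : ℝ → ℝ) (x : ℝ) (μ : ℕ) : Prop :=
  ∀ r < μ, iteratedDeriv r F x = 0

def AtMostZeros (m : ℕ) (I : Set ℝ) (F : ℝ → ℝ) : Prop :=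
  ∀ (h : ℕ) (τ : Fin h → ℝ) (μ : Fin h → ℕ),
    Function.Injective τ → (∀ j, τ j ∈ I) → (∀ j, 1 ≤ μ j ∧ μ j ≤ m) →
    (∑ j, μ j) = m → ¬ (∀ j, VanishesTo F (τ j) (μ j))

private lemma itd_add {n : ℕ} {f g : ℝ → ℝ} (hf : ContDiff ℝ n f) (hg : ContDiff ℝ n g)
    (x : ℝ) : iteratedDeriv n (f + g) x = iteratedDeriv n f x + iteratedDeriv n g x := by
  simp only [iteratedDeriv_eq_iteratedFDeriv, iteratedFDeriv_add_apply hf.contDiffAt hg.contDiffAt,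
    ContinuousMultilinearMap.add_apply]

private lemma itd_smul {n : ℕ} {f : ℝ → ℝ} (hf : ContDiff ℝ n f) (c : ℝ)
    (x : ℝ) : iteratedDeriv n (c • f) x = c • iteratedDeriv n f x := by
  simp only [iteratedDeriv_eq_iteratedFDeriv, iteratedFDeriv_const_smul_apply hf.contDiffAt,
    ContinuousMultilinearMap.smul_apply]

set_option maxHeartbeats 1000000 in
theorem stmt_15 (m : ℕ) (hm : 2 ≤ m) (a b : ℝ) (hab : a < b)
    (S : Submodule ℝ (ℝ → ℝ))
    (hdim : Module.finrank ℝ S = m)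
    (hsm : ∀ F ∈ S, ContDiff ℝ (m - 1 : ℕ) F)
    (h1 : (fun _ => (1 : ℝ)) ∈ S)
    (hEC : ∀ F ∈ S, F ≠ 0 → AtMostZeros m (Set.Icc a b) F) :
    ∀ ℓ, 2 ≤ ℓ → ℓ ≤ m →
      ∃! f : ℝ → ℝ, f ∈ S ∧
        (∀ r ≤ ℓ - 2, iteratedDeriv r f a = 0) ∧
        f b = 1 ∧
        (∀ r, 1 ≤ r → r ≤ m - ℓ → iteratedDeriv r f b = 0) := by
  intro ℓ hℓ2 hℓm
  have hfd : FiniteDimensional ℝ S := FiniteDimensional.of_finrank_pos (by omega)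
  have hcd : ∀ (F : S) (n : ℕ), n ≤ m - 1 → ContDiff ℝ n (F : ℝ → ℝ) := by
    intro F n hn
    exact (hsm F.1 F.2).of_le (by exact_mod_cast hn)
  let T : S →ₗ[ℝ] (Fin m → ℝ) :=
    { toFun := fun F i =>
        if (i : ℕ) < ℓ - 1 then iteratedDeriv i (F : ℝ → ℝ) a
        else iteratedDeriv ((i : ℕ) - (ℓ - 1)) (F : ℝ → ℝ) b
      map_add' := by
        intro F G; funext i
        have hF := hcd F (i : ℕ) (by omega)
        have hG := hcd G (i : ℕ) (by omega)
        have hF' := hcd F ((i : ℕ) - (ℓ - 1)) (by omega)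
        have hG' := hcd G ((i : ℕ) - (ℓ - 1)) (by omega)
        simp only [Submodule.coe_add, Pi.add_apply]
        split
        · exact itd_add hF hG a
        · exact itd_add hF' hG' b
      map_smul' := by
        intro c F; funext i
        have hF := hcd F (i : ℕ) (by omega)
        have hF' := hcd F ((i : ℕ) - (ℓ - 1)) (by omega)
        simp only [SetLike.val_smul, RingHom.id_apply, Pi.smul_apply]
        split
        · exact itd_smul hF c a
        · exact itd_smul hF' c b }
  have hTapp : ∀ (F : S) (i : Fin m), T F i =
      if (i : ℕ) < ℓ - 1 then iteratedDeriv i (F : ℝ → ℝ) a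
      else iteratedDeriv ((i : ℕ) - (ℓ - 1)) (F : ℝ → ℝ) b := fun F i => rfl
  have hne : a ≠ b := hab.ne
  -- T is injective
  have hinj : Function.Injective T := by
    rw [← LinearMap.ker_eq_bot, LinearMap.ker_eq_bot']
    intro F hF
    by_contra hF0
    have hFne : (F : ℝ → ℝ) ≠ 0 := fun h => hF0 (Subtype.ext h)
    apply hEC F.1 F.2 hFne 2 ![a, b] ![ℓ - 1, m - (ℓ - 1)]
    · intro i j hij
      fin_cases i <;> fin_cases j <;> simp_all
    · intro j; fin_cases j
      · exact ⟨le_refl a, hab.le⟩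
      · exact ⟨hab.le, le_refl b⟩
    · intro j; fin_cases j
      · exact (by constructor <;> omega : 1 ≤ ℓ - 1 ∧ ℓ - 1 ≤ m)
      · exact (by constructor <;> omega : 1 ≤ m - (ℓ - 1) ∧ m - (ℓ - 1) ≤ m)
    · rw [Fin.sum_univ_two]; show ℓ - 1 + (m - (ℓ - 1)) = m; omega
    · intro j; fin_cases j
      · intro r hr
        have hr' : r < ℓ - 1 := hr
        have hrm : r < m := by omega
        have h2 := congrFun hF ⟨r, hrm⟩
        rw [hTapp F ⟨r, hrm⟩] at h2
        rw [if_pos (by simpa using hr')] at h2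
        show iteratedDeriv r (F : ℝ → ℝ) a = 0
        simpa using h2
      · intro r hr
        have hr' : r < m - (ℓ - 1) := hr
        have him : (ℓ - 1) + r < m := by omega
        have h2 := congrFun hF ⟨(ℓ - 1) + r, him⟩
        rw [hTapp F ⟨(ℓ - 1) + r, him⟩] at h2
        rw [if_neg (by simp)] at h2
        show iteratedDeriv r (F : ℝ → ℝ) b = 0
        simpa [Nat.add_sub_cancel_left] using h2
  -- T is surjective
  have hsurj : Function.Surjective T :=
    (LinearMap.injective_iff_surjective_of_finrank_eq_finrank (by simp [hdim])).mp hinj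
  have hpm : ℓ - 1 < m := by omega
  obtain ⟨f, hf⟩ := hsurj (Pi.single ⟨ℓ - 1, hpm⟩ 1)
  have hval : ∀ i : Fin m,
      (if (i : ℕ) < ℓ - 1 then iteratedDeriv i (f : ℝ → ℝ) a
        else iteratedDeriv ((i : ℕ) - (ℓ - 1)) (f : ℝ → ℝ) b)
      = if i = ⟨ℓ - 1, hpm⟩ then 1 else 0 := by
    intro i
    have h2 := congrFun hf i
    rw [hTapp f i] at h2
    rw [h2, Pi.single_apply]
  refine ⟨f.1, ⟨f.2, ?_, ?_, ?_⟩, ?_⟩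
  · intro r hr
    have hrm : r < m := by omega
    have h := hval ⟨r, hrm⟩
    rw [if_pos (by simp; omega), if_neg (by simp [Fin.ext_iff]; omega)] at h
    exact h
  · have h := hval ⟨ℓ - 1, hpm⟩
    rw [if_neg (by simp), if_pos rfl] at h
    simpa [Nat.sub_self, iteratedDeriv_zero] using h
  · intro r hr1 hr2
    have him : (ℓ - 1) + r < m := by omega
    have h := hval ⟨(ℓ - 1) + r, him⟩
    rw [if_neg (by simp), if_neg (by simp [Fin.ext_iff]; omega)] at h
    simpa [Nat.add_sub_cancel_left] using h
  · rintro g ⟨hgS, hga, hgb1, hgb⟩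
    have hTg : T ⟨g, hgS⟩ = T f := by
      rw [hf]
      funext i
      rw [hTapp ⟨g, hgS⟩ i, Pi.single_apply]
      by_cases hi : (i : ℕ) < ℓ - 1
      · rw [if_pos hi, if_neg (by simp [Fin.ext_iff]; omega)]
        exact hga i (by omega)
      · rw [if_neg hi]
        by_cases hi0 : (i : ℕ) = ℓ - 1
        · rw [if_pos (by simp [Fin.ext_iff, hi0]), hi0, Nat.sub_self]
          simpa [iteratedDeriv_zero] using hgb1
        · rw [if_neg (by simp [Fin.ext_iff]; omega)]
          exact hgb _ (by omega) (by omega)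
    exact congrArg Subtype.val (hinj hTg)
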